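/- Let m(t) = (√3/10)(9 sin(√3 t/9) + 7 sin(√3 t/3)). Then the function G(t) = −m″(t)/m(t) is strictly decreasing on the interval (0, 3√3 π/2). -/

import Mathlib

open Real

/-- The profile function of the Sinclair–Tanaka example of a model surface. -/
noncomputable def stProfile (t : ℝ) : ℝ :=
  (Real.sqrt 3 / 10) * (9 * Real.sin (Real.sqrt 3 * t / 9) + 7 * Real.sin (Real.sqrt 3 * t / 3))

/-- First derivative of `stProfile`. -/
noncomputable def stP1 (t : ℝ) : ℝ :=
  (Real.sqrt 3 / 10) * (9 * (Real.cos (Real.sqrt 3 * t / 9) * (Real.sqrt 3 / 9)) +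
    7 * (Real.cos (Real.sqrt 3 * t / 3) * (Real.sqrt 3 / 3)))

/-- Second derivative of `stProfile`. -/
noncomputable def stP2 (t : ℝ) : ℝ :=
  (Real.sqrt 3 / 10) * (9 * (-Real.sin (Real.sqrt 3 * t / 9) * (Real.sqrt 3 / 9) * (Real.sqrt 3 / 9)) +
    7 * (-Real.sin (Real.sqrt 3 * t / 3) * (Real.sqrt 3 / 3) * (Real.sqrt 3 / 3)))

lemma st_hasDerivAt_arg (c t : ℝ) :
    HasDerivAt (fun x : ℝ => Real.sqrt 3 * x / c) (Real.sqrt 3 / c) t := by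
  simpa using ((hasDerivAt_id t).const_mul (Real.sqrt 3)).div_const c

lemma hasDerivAt_stProfile (t : ℝ) : HasDerivAt stProfile (stP1 t) t := by
  have h1 := (Real.hasDerivAt_sin (Real.sqrt 3 * t / 9)).comp t (st_hasDerivAt_arg 9 t)
  have h2 := (Real.hasDerivAt_sin (Real.sqrt 3 * t / 3)).comp t (st_hasDerivAt_arg 3 t)
  have := (((h1.const_mul (9:ℝ)).add (h2.const_mul (7:ℝ))).const_mul (Real.sqrt 3 / 10))
  unfold stProfile
  simpa [stProfile, stP1, Function.comp] using this

lemma hasDerivAt_stP1 (t : ℝ) : HasDerivAt stP1 (stP2 t) t := by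
  have h1 := (Real.hasDerivAt_cos (Real.sqrt 3 * t / 9)).comp t (st_hasDerivAt_arg 9 t)
  have h2 := (Real.hasDerivAt_cos (Real.sqrt 3 * t / 3)).comp t (st_hasDerivAt_arg 3 t)
  have := ((((h1.mul_const (Real.sqrt 3 / 9)).const_mul (9:ℝ)).add
    ((h2.mul_const (Real.sqrt 3 / 3)).const_mul (7:ℝ))).const_mul (Real.sqrt 3 / 10))
  unfold stP1
  simpa [stP1, stP2, Function.comp] using this

lemma st_G_eq (t : ℝ) (ht : t ∈ Set.Ioo (0 : ℝ) (3 * Real.sqrt 3 * π / 2)) :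
    -(deriv (deriv stProfile) t) / stProfile t =
      (11 - 14 * Real.sin (Real.sqrt 3 * t / 9) ^ 2) /
        (3 * (15 - 14 * Real.sin (Real.sqrt 3 * t / 9) ^ 2)) := by
  have hd1 : deriv stProfile = stP1 := funext fun x => (hasDerivAt_stProfile x).deriv
  have hd2 : deriv (deriv stProfile) t = stP2 t := by rw [hd1]; exact (hasDerivAt_stP1 t).deriv
  rw [hd2]
  have h3 : Real.sqrt 3 * Real.sqrt 3 = 3 := Real.mul_self_sqrt (by norm_num)
  have hsqrt : 0 < Real.sqrt 3 := Real.sqrt_pos.mpr (by norm_num)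
  set u := Real.sqrt 3 * t / 9 with hu
  have hupos : 0 < u := by have := ht.1; positivity
  have hult : u < π / 2 := by
    have h := ht.2
    rw [hu]
    nlinarith [Real.pi_pos]
  have hs : 0 < Real.sin u :=
    Real.sin_pos_of_pos_of_lt_pi hupos (by nlinarith [Real.pi_pos])
  have h3u : Real.sqrt 3 * t / 3 = 3 * u := by rw [hu]; ring
  have hsin3 : Real.sin (Real.sqrt 3 * t / 3) = 3 * Real.sin u - 4 * Real.sin u ^ 3 := by
    rw [h3u, Real.sin_three_mul]
  have hsle : Real.sin u ≤ 1 := Real.sin_le_one u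
  set s := Real.sin u with hsdef
  have hden : (0:ℝ) < 3 * (15 - 14 * s ^ 2) := by nlinarith
  have hprof : 0 < stProfile t := by
    unfold stProfile
    rw [hsin3]
    nlinarith [mul_pos hs (show (0:ℝ) < 30 - 28 * s ^ 2 by nlinarith)]
  rw [div_eq_div_iff (ne_of_gt hprof) (ne_of_gt hden)]
  unfold stProfile stP2
  rw [hsin3]
  linear_combination (Real.sqrt 3 * ((1/30) * (22 * s - 28 * s ^ 3) * (15 - 14 * s ^ 2))) * h3

/-- **Sinclair–Tanaka example, curvature monotonicity.** The Gaussian curvature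
`G(t) = −m″(t)/m(t)` of the surface of revolution with profile
`m(t) = (√3/10)(9 sin(√3 t/9) + 7 sin(√3 t/3))` is strictly decreasing on
`(0, 3√3 π/2)` (from the pole to the equator). -/
theorem sinclairTanaka_curvature_strictAnti :
    StrictAntiOn (fun t => -(deriv (deriv stProfile) t) / stProfile t)
      (Set.Ioo (0 : ℝ) (3 * Real.sqrt 3 * π / 2)) := by
  intro a ha b hb hab
  simp only []
  rw [st_G_eq a ha, st_G_eq b hb]
  have h3 : Real.sqrt 3 * Real.sqrt 3 = 3 := Real.mul_self_sqrt (by norm_num)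
  have hsqrt : 0 < Real.sqrt 3 := Real.sqrt_pos.mpr (by norm_num)
  set ua := Real.sqrt 3 * a / 9 with hua
  set ub := Real.sqrt 3 * b / 9 with hub
  have hua0 : 0 < ua := by have := ha.1; positivity
  have hub0 : 0 < ub := by have := hb.1; positivity
  have huaπ : ua < π / 2 := by have h := ha.2; rw [hua]; nlinarith [Real.pi_pos]
  have hubπ : ub < π / 2 := by have h := hb.2; rw [hub]; nlinarith [Real.pi_pos]
  have huab : ua < ub := by rw [hua, hub]; nlinarith
  have hsin : Real.sin ua < Real.sin ub := by
    apply Real.strictMonoOn_sin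
    · constructor <;> nlinarith [Real.pi_pos]
    · constructor <;> nlinarith [Real.pi_pos]
    · exact huab
  have hsa : 0 < Real.sin ua := Real.sin_pos_of_pos_of_lt_pi hua0 (by nlinarith [Real.pi_pos])
  have hsb1 : Real.sin ub ≤ 1 := Real.sin_le_one ub
  set sa := Real.sin ua
  set sb := Real.sin ub
  have hda : (0:ℝ) < 3 * (15 - 14 * sa ^ 2) := by nlinarith
  have hdb : (0:ℝ) < 3 * (15 - 14 * sb ^ 2) := by nlinarith
  rw [div_lt_div_iff₀ hdb hda]
  nlinarith [mul_pos (show (0:ℝ) < sb - sa by linarith) (show (0:ℝ) < sb + sa by linarith)]
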